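/- arXiv:1204.3982 — 5 statements merged into one kernel-verified Lean document; each statement's English description precedes it below -/
import Mathlib

section
/- Let f : ℝ^n → ℝ be convex and differentiable with L-Lipschitz continuous gradient (L > 0), attaining its minimum f* at a point x*. Consider Nesterov's accelerated gradient scheme with step size t = 1/L and q = 0: starting from x⁰ = y⁰, θ₀ = 1, iterate x^{k+1} = y^k − (1/L)∇f(y^k), θ_{k+1} the positive root of θ_{k+1}² = (1 − θ_{k+1})θ_k², β_{k+1} = θ_k(1 − θ_k)/(θ_k² + θ_{k+1}), y^{k+1} = x^{k+1} + β_{k+1}(x^{k+1} − x^k). Then for all k ≥ 0, f(x^k) − f* ≤ 4L‖x⁰ − x*‖² / (k + 2)². -/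
open Set
open scoped RealInnerProductSpace

section Helpers
variable {E : Type*} [NormedAddCommGroup E] [InnerProductSpace ℝ E] [CompleteSpace E]


lemma nes_line_hasDerivAt (f : E → ℝ) (hdiff : Differentiable ℝ f) (a v : E) (t : ℝ) :
    HasDerivAt (fun s : ℝ => f (a + s • v)) ⟪gradient f (a + t • v), v⟫ t := by
  have h1 : HasFDerivAt f
      (InnerProductSpace.toDual ℝ E (gradient f (a + t • v))) (a + t • v) := by
    rw [← hasGradientAt_iff_hasFDerivAt]
    exact (hdiff _).hasGradientAt
  have h2 : HasDerivAt (fun s : ℝ => a + s • v) v t := by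
    simpa using ((hasDerivAt_id t).smul_const v).const_add a
  have h3 := h1.comp_hasDerivAt t h2
  simpa [InnerProductSpace.toDual_apply_apply, Function.comp_def] using h3

lemma nes_conv_ineq (f : E → ℝ) (hconv : ConvexOn ℝ univ f) (hdiff : Differentiable ℝ f)
    (a b : E) : f a + ⟪gradient f a, b - a⟫ ≤ f b := by
  have hline : HasDerivAt (fun s : ℝ => f (a + s • (b - a))) ⟪gradient f a, b - a⟫ 0 := by
    simpa using nes_line_hasDerivAt f hdiff a (b - a) 0
  have hφ : ConvexOn ℝ univ (fun s : ℝ => f (a + s • (b - a))) := by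
    have := hconv.comp_affineMap (AffineMap.lineMap a b)
    simpa [Function.comp_def, AffineMap.lineMap_apply, add_comm, sub_eq_add_neg] using this
  have h := hφ.le_slope_of_hasDerivAt (mem_univ (0:ℝ)) (mem_univ (1:ℝ)) one_pos hline
  rw [slope_def_field] at h
  simp at h
  rw [inner_gradient_left, map_sub]
  linarith

lemma nes_descent (f : E → ℝ) (hdiff : Differentiable ℝ f) (L : ℝ) (hL : 0 < L)
    (hlip : ∀ a b : E, ‖gradient f a - gradient f b‖ ≤ L * ‖a - b‖) (a b : E) :
    f b ≤ f a + ⟪gradient f a, b - a⟫ + L / 2 * ‖b - a‖ ^ 2 := by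
  set v := b - a with hv
  set ψ : ℝ → ℝ := fun t =>
    f (a + t • v) - t * ⟪gradient f a, v⟫ - L * t ^ 2 / 2 * ‖v‖ ^ 2 with hψ
  have hψd : ∀ t : ℝ, HasDerivAt ψ
      (⟪gradient f (a + t • v), v⟫ - ⟪gradient f a, v⟫ - L * t * ‖v‖ ^ 2) t := by
    intro t
    have h1 := nes_line_hasDerivAt f hdiff a v t
    have h2 : HasDerivAt (fun t : ℝ => t * ⟪gradient f a, v⟫) ⟪gradient f a, v⟫ t := by
      simpa using (hasDerivAt_id t).mul_const _
    have h3 : HasDerivAt (fun t : ℝ => L * t ^ 2 / 2 * ‖v‖ ^ 2) (L * t * ‖v‖ ^ 2) t := by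
      have h4 : HasDerivAt (fun t : ℝ => t ^ 2) (2 * t) t := by
        simpa using hasDerivAt_pow 2 t
      have h5 := ((h4.const_mul L).div_const 2).mul_const (‖v‖ ^ 2)
      refine h5.congr_deriv ?_
      ring
    exact (h1.sub h2).sub h3
  have hanti : AntitoneOn ψ (Icc (0:ℝ) 1) := by
    apply antitoneOn_of_deriv_nonpos (convex_Icc 0 1)
    · exact Continuous.continuousOn (by
        exact continuous_iff_continuousAt.2 fun t => ((hψd t).differentiableAt).continuousAt)
    · exact fun t _ => ((hψd t).differentiableAt).differentiableWithinAt
    · intro t ht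
      rw [interior_Icc, mem_Ioo] at ht
      rw [(hψd t).deriv]
      have hb : ⟪gradient f (a + t • v) - gradient f a, v⟫ ≤ L * t * ‖v‖ ^ 2 := by
        calc ⟪gradient f (a + t • v) - gradient f a, v⟫
            ≤ ‖gradient f (a + t • v) - gradient f a‖ * ‖v‖ := real_inner_le_norm _ _
          _ ≤ (L * ‖(a + t • v) - a‖) * ‖v‖ := by
              have := hlip (a + t • v) a
              exact mul_le_mul_of_nonneg_right this (norm_nonneg _)
          _ = L * t * ‖v‖ ^ 2 := by
              simp [norm_smul, abs_of_pos ht.1]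
              ring
      rw [inner_sub_left] at hb
      linarith
  have h01 : (0:ℝ) ∈ Icc (0:ℝ) 1 := by constructor <;> norm_num
  have h11 : (1:ℝ) ∈ Icc (0:ℝ) 1 := by constructor <;> norm_num
  have := hanti h01 h11 zero_le_one
  simp [hψ] at this
  have hab : a + v = b := by rw [hv]; abel
  rw [hab] at this
  rw [inner_gradient_left]
  linarith

lemma nes_grad_min_zero (f : E → ℝ) (hdiff : Differentiable ℝ f) (xstar : E)
    (hmin : ∀ z, f xstar ≤ f z) : gradient f xstar = 0 := by
  have hloc : IsLocalMin f xstar := Filter.Eventually.of_forall hmin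
  have hfd : fderiv ℝ f xstar = 0 := hloc.fderiv_eq_zero
  have h0 : HasFDerivAt f (0 : E →L[ℝ] ℝ) xstar := by
    have := (hdiff xstar).hasFDerivAt
    rwa [hfd] at this
  have hg : HasGradientAt f ((InnerProductSpace.toDual ℝ E).symm (0 : E →L[ℝ] ℝ)) xstar :=
    hasFDerivAt_iff_hasGradientAt.1 (by simpa using h0)
  have := hg.gradient
  simpa using this


end Helpers

set_option maxHeartbeats 2000000 in
/-- Nesterov's accelerated gradient scheme (Algorithm 1 with `q = 0`, step size `1/L`)
applied to a convex function `f` with `L`-Lipschitz gradient and minimizer `xstar`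
satisfies `f (x k) - f xstar ≤ 4 L ‖x 0 - xstar‖² / (k + 2)²`. -/
theorem stmt_0 {n : ℕ} (L : ℝ) (hL : 0 < L)
    (f : EuclideanSpace ℝ (Fin n) → ℝ)
    (hconv : ConvexOn ℝ Set.univ f)
    (hdiff : Differentiable ℝ f)
    (hlip : ∀ a b : EuclideanSpace ℝ (Fin n),
      ‖gradient f a - gradient f b‖ ≤ L * ‖a - b‖)
    (xstar : EuclideanSpace ℝ (Fin n))
    (hmin : ∀ z, f xstar ≤ f z)
    (x y : ℕ → EuclideanSpace ℝ (Fin n)) (θ β : ℕ → ℝ)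
    (hy0 : y 0 = x 0) (hθ0 : θ 0 = 1)
    (hx : ∀ k, x (k + 1) = y k - (1 / L) • gradient f (y k))
    (hθ : ∀ k, 0 < θ (k + 1) ∧ (θ (k + 1)) ^ 2 = (1 - θ (k + 1)) * (θ k) ^ 2)
    (hβ : ∀ k, β (k + 1) = θ k * (1 - θ k) / ((θ k) ^ 2 + θ (k + 1)))
    (hy : ∀ k, y (k + 1) = x (k + 1) + β (k + 1) • (x (k + 1) - x k)) :
    ∀ k : ℕ, f (x k) - f xstar ≤ 4 * L * ‖x 0 - xstar‖ ^ 2 / ((k : ℝ) + 2) ^ 2 := by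
  have hgrad0 : gradient f xstar = 0 := nes_grad_min_zero f hdiff xstar hmin
  -- positivity of θ
  have hθpos : ∀ k, 0 < θ k := by
    intro k
    cases k with
    | zero => rw [hθ0]; norm_num
    | succ j => exact (hθ j).1
  have hθle1 : ∀ k, θ k ≤ 1 := by
    intro k
    cases k with
    | zero => rw [hθ0]
    | succ j =>
        have h2 := (hθ j).2
        have h1 := (hθ j).1
        nlinarith [sq_nonneg (θ (j+1)), sq_nonneg (θ j), hθpos j, sq_nonneg (θ j * θ (j+1))]
  have hθbound : ∀ k, θ k * ((k : ℝ) + 2) ≤ 2 := by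
    intro k
    induction k with
    | zero => rw [hθ0]; norm_num
    | succ j ih =>
        have h2 := (hθ j).2
        have hq := hθpos (j + 1)
        have hp := hθpos j
        have hq1 := hθle1 (j + 1)
        have hc : (0:ℝ) ≤ (j : ℝ) := Nat.cast_nonneg j
        push_cast
        push_cast at ih
        nlinarith [sq_nonneg (θ (j+1) * ((j:ℝ)+2) - 2), sq_nonneg (θ j * ((j:ℝ)+2) - 2),
          mul_pos hp hq, sq_nonneg (θ j - θ (j+1)), mul_nonneg hq.le hc,
          mul_nonneg (mul_nonneg hq.le hq.le) hc]
  -- auxiliary sequence v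
  set v : ℕ → EuclideanSpace ℝ (Fin n) :=
    fun k => Nat.casesOn k (x 0) (fun j => x j + (θ j)⁻¹ • (x (j + 1) - x j)) with hvdef
  have hv0 : v 0 = x 0 := rfl
  have hvs : ∀ j, v (j + 1) = x j + (θ j)⁻¹ • (x (j + 1) - x j) := fun j => rfl
  -- y k as convex combination of x k and v k
  have hyv : ∀ k, y k = (1 - θ k) • x k + θ k • v k := by
    intro k
    cases k with
    | zero => rw [hy0, hθ0, hv0]; module
    | succ j =>
        have hβval : β (j + 1) = θ (j + 1) * (θ j)⁻¹ - θ (j + 1) := by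
          rw [hβ j]
          have h2 := (hθ j).2
          have hp := (hθpos j).ne'
          have hd : (0:ℝ) < (θ j) ^ 2 + θ (j + 1) :=
            add_pos (pow_pos (hθpos j) 2) (hθpos (j + 1))
          field_simp
          linear_combination (θ j - 1) * h2
        rw [hy j, hβval, hvs j]
        module
  have hvrec : ∀ k, v (k + 1) = v k - ((θ k)⁻¹ * (1 / L)) • gradient f (y k) := by
    intro k
    cases k with
    | zero =>
        rw [hvs 0, hv0, hx 0, hy0, hθ0]
        simp only [inv_one, one_smul, one_mul]
        module
    | succ j =>
        rw [hvs (j + 1), hx (j + 1), hyv (j + 1)]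
        have hp := (hθpos (j + 1)).ne'
        rw [hvs j]
        match_scalars <;> (field_simp; try ring)
  -- key one-step inequality
  have key : ∀ k, f (x (k + 1)) - f xstar ≤ (1 - θ k) * (f (x k) - f xstar)
      + L * (θ k) ^ 2 / 2 * (‖v k - xstar‖ ^ 2 - ‖v (k + 1) - xstar‖ ^ 2) := by
    intro k
    set g := gradient f (y k) with hg
    have hθk := hθpos k
    have hθk1 := hθle1 k
    have e1 : x (k + 1) - y k = -((1 / L) • g) := by rw [hx k]; abel
    have hdesc := nes_descent f hdiff L hL hlip (y k) (x (k + 1))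
    rw [e1] at hdesc
    have hdesc' : f (x (k + 1)) ≤ f (y k) - 1 / (2 * L) * ‖g‖ ^ 2 := by
      have hinner : ⟪g, -((1 / L) • g)⟫ = -(1 / L) * ‖g‖ ^ 2 := by
        rw [inner_neg_right, real_inner_smul_right, real_inner_self_eq_norm_sq]; ring
      have hnorm : ‖-((1 / L) • g)‖ ^ 2 = (1 / L) ^ 2 * ‖g‖ ^ 2 := by
        rw [norm_neg, norm_smul]
        simp [abs_of_pos hL]
        ring
      rw [hinner, hnorm] at hdesc
      have this2 : -(1 / L) * ‖g‖ ^ 2 + L / 2 * ((1 / L) ^ 2 * ‖g‖ ^ 2)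
          = -(1 / (2 * L)) * ‖g‖ ^ 2 := by
        field_simp
        ring
      linarith [hdesc, this2]
    have h2 := nes_conv_ineq f hconv hdiff (y k) (x k)
    have h3 := nes_conv_ineq f hconv hdiff (y k) xstar
    have iden : (1 - θ k) * ⟪g, x k - y k⟫ + θ k * ⟪g, xstar - y k⟫
        = -(θ k * ⟪g, v k - xstar⟫) := by
      rw [hyv k]
      simp [inner_sub_right, inner_add_right, inner_smul_right]
      ring
    have h4 : ‖v (k + 1) - xstar‖ ^ 2 = ‖v k - xstar‖ ^ 2
        - 2 * ((θ k)⁻¹ * (1 / L)) * ⟪g, v k - xstar⟫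
        + ((θ k)⁻¹ * (1 / L)) ^ 2 * ‖g‖ ^ 2 := by
      rw [hvrec k]
      have : v k - ((θ k)⁻¹ * (1 / L)) • g - xstar
          = (v k - xstar) - ((θ k)⁻¹ * (1 / L)) • g := by abel
      rw [this, norm_sub_sq_real, real_inner_smul_right, norm_smul]
      rw [real_inner_comm]
      simp [mul_pow, sq_abs]
      ring
    have hc : L * (θ k) ^ 2 / 2 * (2 * ((θ k)⁻¹ * (1 / L)) * ⟪g, v k - xstar⟫
        - ((θ k)⁻¹ * (1 / L)) ^ 2 * ‖g‖ ^ 2)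
        = θ k * ⟪g, v k - xstar⟫ - 1 / (2 * L) * ‖g‖ ^ 2 := by
      field_simp
    have h4' : L * (θ k) ^ 2 / 2 * (‖v k - xstar‖ ^ 2 - ‖v (k + 1) - xstar‖ ^ 2)
        = θ k * ⟪g, v k - xstar⟫ - 1 / (2 * L) * ‖g‖ ^ 2 := by
      rw [h4, ← hc]; ring
    have h2' := mul_le_mul_of_nonneg_left h2 (by linarith : (0:ℝ) ≤ 1 - θ k)
    have h3' := mul_le_mul_of_nonneg_left h3 (by linarith : (0:ℝ) ≤ θ k)
    rw [mul_add] at h2' h3'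
    linarith [h2', h3', iden, h4', hdesc']
  have hδnonneg : ∀ k, 0 ≤ f (x k) - f xstar := fun k => by linarith [hmin (x k)]
  -- telescoped bound
  have hS : ∀ k, f (x (k + 1)) - f xstar
      ≤ (θ k) ^ 2 * (L / 2 * ‖x 0 - xstar‖ ^ 2 - L / 2 * ‖v (k + 1) - xstar‖ ^ 2) := by
    intro k
    induction k with
    | zero =>
        have hk0 := key 0
        rw [hθ0, hv0] at hk0
        rw [hθ0]
        ring_nf at hk0 ⊢
        linarith [hk0]
    | succ j ih =>
        have hk := key (j + 1)
        have hq := hθpos (j + 1)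
        have hq1 := hθle1 (j + 1)
        have h2 := (hθ j).2
        have h' := mul_le_mul_of_nonneg_left ih (by linarith : (0:ℝ) ≤ 1 - θ (j + 1))
        have e : (1 - θ (j + 1)) * ((θ j) ^ 2
              * (L / 2 * ‖x 0 - xstar‖ ^ 2 - L / 2 * ‖v (j + 1) - xstar‖ ^ 2))
            = (θ (j + 1)) ^ 2
              * (L / 2 * ‖x 0 - xstar‖ ^ 2 - L / 2 * ‖v (j + 1) - xstar‖ ^ 2) := by
          rw [h2]; ring
        linarith [hk, h', e]
  -- conclusion
  intro k
  have hR : (0:ℝ) ≤ ‖x 0 - xstar‖ ^ 2 := by positivity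
  match k with
  | 0 =>
      have hd := nes_descent f hdiff L hL hlip xstar (x 0)
      rw [hgrad0] at hd
      simp only [inner_zero_left, add_zero, zero_add] at hd
      have h4 : 4 * L * ‖x 0 - xstar‖ ^ 2 / (((0:ℕ):ℝ) + 2) ^ 2
          = L * ‖x 0 - xstar‖ ^ 2 := by push_cast; ring
      rw [h4]
      nlinarith [hd, mul_nonneg hL.le hR]
  | 1 =>
      set g := gradient f (x 0) with hgd
      have hd1 := nes_descent f hdiff L hL hlip (y 0) (x 1)
      have e1 : x 1 - y 0 = -((1 / L) • gradient f (y 0)) := by rw [hx 0]; abel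
      rw [e1, hy0, ← hgd] at hd1
      have hinner : ⟪g, -((1 / L) • g)⟫ = -(1 / L) * ‖g‖ ^ 2 := by
        rw [inner_neg_right, real_inner_smul_right, real_inner_self_eq_norm_sq]; ring
      have hnorm : ‖-((1 / L) • g)‖ ^ 2 = (1 / L) ^ 2 * ‖g‖ ^ 2 := by
        rw [norm_neg, norm_smul]
        simp [abs_of_pos hL]
        ring
      rw [hinner, hnorm] at hd1
      set w := xstar + (1 / L) • g with hw
      have hw1 := nes_descent f hdiff L hL hlip xstar w
      rw [hgrad0] at hw1
      simp only [inner_zero_left, add_zero, zero_add] at hw1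
      have hwn : ‖w - xstar‖ ^ 2 = (1 / L) ^ 2 * ‖g‖ ^ 2 := by
        have hww : w - xstar = (1 / L) • g := by rw [hw]; abel
        rw [hww, norm_smul]
        simp [abs_of_pos hL]
        ring
      rw [hwn] at hw1
      have hw2 := nes_conv_ineq f hconv hdiff (x 0) w
      have hwi : ⟪g, w - x 0⟫ = -⟪g, x 0 - xstar⟫ + (1 / L) * ‖g‖ ^ 2 := by
        have hww : w - x 0 = -(x 0 - xstar) + (1 / L) • g := by rw [hw]; abel
        rw [hww, inner_add_right, inner_neg_right, real_inner_smul_right,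
          real_inner_self_eq_norm_sq]
      rw [hwi] at hw2
      have hcs := real_inner_le_norm g (x 0 - xstar)
      have hE2 : L / 2 * ((1 / L) ^ 2 * ‖g‖ ^ 2) = 1 / (2 * L) * ‖g‖ ^ 2 := by
        field_simp
      -- f(x 1) - f xstar ≤ ‖g‖ * ‖x 0 - xstar‖ - (1/L) * ‖g‖^2
      have he3 : -(1 / L) * ‖g‖ ^ 2 + L / 2 * ((1 / L) ^ 2 * ‖g‖ ^ 2)
          = -(1 / (2 * L)) * ‖g‖ ^ 2 := by
        field_simp
        ring
      have hfin : f (x 1) - f xstar ≤ ‖g‖ * ‖x 0 - xstar‖ - (1 / L) * ‖g‖ ^ 2 := by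
        linarith [hd1, hw1, hw2, hE2, hcs, he3]
      have hfin2 : L * (f (x 1) - f xstar) ≤ L * (‖g‖ * ‖x 0 - xstar‖) - ‖g‖ ^ 2 := by
        have := mul_le_mul_of_nonneg_left hfin hL.le
        have hLL : L * ((1 / L) * ‖g‖ ^ 2) = ‖g‖ ^ 2 := by field_simp
        nlinarith [this, hLL]
      rw [le_div_iff₀ (by norm_num : (0:ℝ) < (((1:ℕ):ℝ) + 2) ^ 2)]
      have h9 : (((1:ℕ):ℝ) + 2) ^ 2 = 9 := by norm_num
      rw [h9]
      nlinarith [hfin2, hL, sq_nonneg (6 * ‖g‖ - 3 * L * ‖x 0 - xstar‖),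
        sq_nonneg (L * ‖x 0 - xstar‖), mul_pos hL hL]
  | (m + 2) =>
      have hs := hS (m + 1)
      have hb := hθbound (m + 1)
      have hq := hθpos (m + 1)
      have hN : (0:ℝ) ≤ ‖v (m + 2) - xstar‖ ^ 2 := by positivity
      rw [le_div_iff₀ (by positivity : (0:ℝ) < (((m + 2 : ℕ) : ℝ) + 2) ^ 2)]
      push_cast at hb ⊢
      have hm0 : (0:ℝ) ≤ (m:ℝ) := Nat.cast_nonneg m
      have hsq : (θ (m + 1)) ^ 2 * ((m:ℝ) + 3) ^ 2 ≤ 4 := by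
        nlinarith [hb, hq, mul_nonneg hq.le (by linarith : (0:ℝ) ≤ (m:ℝ) + 3)]
      have hmono : ((m:ℝ) + 4) ^ 2 ≤ 2 * ((m:ℝ) + 3) ^ 2 := by nlinarith [sq_nonneg ((m:ℝ))]
      have hθsq : (θ (m + 1)) ^ 2 * ((m:ℝ) + 4) ^ 2 ≤ 8 := by
        nlinarith [sq_nonneg (θ (m + 1)), hsq, hmono]
      have hup : f (x (m + 2)) - f xstar ≤ (θ (m + 1)) ^ 2 * (L / 2 * ‖x 0 - xstar‖ ^ 2) := by
        nlinarith [hs, mul_nonneg (sq_nonneg (θ (m + 1)))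
          (mul_nonneg (by linarith : (0:ℝ) ≤ L / 2) hN)]
      have hstep1 := mul_le_mul_of_nonneg_right hup (sq_nonneg ((m:ℝ) + 4))
      have hstep2 := mul_le_mul_of_nonneg_left hθsq
        (by positivity : (0:ℝ) ≤ L / 2 * ‖x 0 - xstar‖ ^ 2)
      nlinarith [hstep1, hstep2]
end

section
/- Let 0 < λ < L and β ∈ [0, 1]. The characteristic polynomial p(r) = r² − (1+β)(1 − λ/L)·r + β(1 − λ/L) has a repeated (real) root if and only if β = β*(λ) := (1 − √(λ/L))/(1 + √(λ/L)). -/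
/-- For `0 < lam < L` and `β ∈ [0,1]`, the characteristic polynomial
`r² - (1+β)(1-lam/L) r + β(1-lam/L)` has a repeated (real) root if and only if
`β = (1 - √(lam/L))/(1 + √(lam/L))`. -/
theorem stmt_8 (L lam β : ℝ) (hlam : 0 < lam) (hlamL : lam < L)
    (hβ : β ∈ Set.Icc (0 : ℝ) 1) :
    (∃ r : ℝ, ∀ x : ℝ,
        x ^ 2 - (1 + β) * (1 - lam / L) * x + β * (1 - lam / L) = (x - r) ^ 2) ↔
      β = (1 - Real.sqrt (lam / L)) / (1 + Real.sqrt (lam / L)) := by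
  obtain ⟨hβ0, hβ1⟩ := hβ
  set s := Real.sqrt (lam / L) with hs
  have hL : 0 < L := hlam.trans hlamL
  have hfrac : 0 < lam / L := div_pos hlam hL
  have hfrac1 : lam / L < 1 := (div_lt_one hL).mpr hlamL
  have hs0 : 0 < s := Real.sqrt_pos.mpr hfrac
  have hs2 : s ^ 2 = lam / L := by rw [sq]; exact Real.mul_self_sqrt hfrac.le
  have hs1 : s < 1 := by nlinarith
  have ha : (0:ℝ) < 1 - lam / L := by linarith
  constructor
  · rintro ⟨r, h⟩
    have h0 := h 0
    have h1 := h 1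
    have ht : (1 + β) * (1 - lam / L) = 2 * r := by nlinarith [h0, h1]
    have key' : (1 - lam / L) * ((1 + β) ^ 2 * (1 - lam / L)) = (1 - lam / L) * (4 * β) := by
      have hsq : ((1 + β) * (1 - lam / L)) ^ 2 = (2 * r) ^ 2 := by rw [ht]
      linear_combination hsq - 4 * h0
    have key0 : (1 + β) ^ 2 * (1 - lam / L) = 4 * β :=
      mul_left_cancel₀ ha.ne' key'
    have key : (1 + β) ^ 2 * (1 - s ^ 2) = 4 * β := by rw [hs2]; exact key0
    have hfac : ((1 + s) * β - (1 - s)) * ((1 - s) * β - (1 + s)) = 0 := by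
      linear_combination key
    have h2 : (1 - s) * β - (1 + s) < 0 := by nlinarith
    have hz : (1 + s) * β - (1 - s) = 0 := by
      rcases mul_eq_zero.mp hfac with h' | h'
      · exact h'
      · linarith
    have hne : (1:ℝ) + s ≠ 0 := by positivity
    field_simp
    linarith
  · intro hb
    have hne : (0:ℝ) < 1 + s := by linarith
    have hβeq : β * (1 + s) = 1 - s := by
      rw [hb]; field_simp
    refine ⟨(1 + β) * (1 - lam / L) / 2, fun x => ?_⟩
    have key : (1 + β) ^ 2 * (1 - s ^ 2) = 4 * β := by
      linear_combination ((1 - s) * β - (1 + s)) * hβeq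
    have key2 : (1 + β) ^ 2 * (1 - lam / L) = 4 * β := by rw [← hs2]; exact key
    linear_combination (-(1 - lam / L) / 4) * key2
end

section
/- Let 0 < λ < L and 0 ≤ β < β* := (1 − √(λ/L))/(1 + √(λ/L)). Then the polynomial r² − (1+β)(1 − λ/L)·r + β(1 − λ/L) has two distinct real roots r₁ > r₂, both roots lie in [0, 1), and the larger root satisfies r₁ > 1 − √(λ/L). -/
set_option maxHeartbeats 1000000 in
/-- Over-damped (low momentum) case `0 ≤ β < β* = (1 - √(lam/L))/(1 + √(lam/L))`:
the polynomial `r² - (1+β)(1-lam/L) r + β(1-lam/L)` has two distinct real roots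
`r₁ > r₂`, both in `[0,1)`, and the larger root satisfies `r₁ > 1 - √(lam/L)`. -/
theorem stmt_10 (L lam β : ℝ) (hlam : 0 < lam) (hlamL : lam < L)
    (hβ0 : 0 ≤ β)
    (hβ : β < (1 - Real.sqrt (lam / L)) / (1 + Real.sqrt (lam / L))) :
    ∃ r₁ r₂ : ℝ, r₂ < r₁ ∧
      (∀ x : ℝ, x ^ 2 - (1 + β) * (1 - lam / L) * x + β * (1 - lam / L)
        = (x - r₁) * (x - r₂)) ∧
      0 ≤ r₂ ∧ r₁ < 1 ∧ 1 - Real.sqrt (lam / L) < r₁ := by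
  have hL : 0 < L := hlam.trans hlamL
  have ht : 0 < lam / L := div_pos hlam hL
  have ht1 : lam / L < 1 := (div_lt_one hL).mpr hlamL
  obtain ⟨s, hsdef⟩ : ∃ s, Real.sqrt (lam / L) = s := ⟨_, rfl⟩
  rw [hsdef] at hβ ⊢
  have hs0 : 0 < s := hsdef ▸ Real.sqrt_pos.mpr ht
  have hssq : s ^ 2 = lam / L := by rw [← hsdef]; exact Real.sq_sqrt ht.le
  have hs1 : s < 1 := by nlinarith
  have hb : β * (1 + s) < 1 - s := (lt_div_iff₀ (by linarith)).mp hβ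
  have h1 : 0 < 1 - s - β * (1 + s) := by linarith
  have h2 : 0 < 1 + s - β * (1 - s) := by nlinarith
  have hc : 0 < 1 - lam / L := by linarith
  have hβ1 : β < 1 := by nlinarith
  have hD : 0 < ((1 + β) * (1 - lam / L)) ^ 2 - 4 * (β * (1 - lam / L)) := by
    have hre : ((1 + β) * (1 - lam / L)) ^ 2 - 4 * (β * (1 - lam / L))
        = (1 - s ^ 2) * ((1 - s - β * (1 + s)) * (1 + s - β * (1 - s))) := by
      rw [← hssq]; ring
    rw [hre]
    exact mul_pos (by nlinarith) (mul_pos h1 h2)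
  obtain ⟨d, hd0, hd2⟩ :
      ∃ d : ℝ, 0 < d ∧ d ^ 2 = ((1 + β) * (1 - lam / L)) ^ 2 - 4 * (β * (1 - lam / L)) :=
    ⟨Real.sqrt _, Real.sqrt_pos.mpr hD, Real.sq_sqrt hD.le⟩
  have ha : 0 ≤ (1 + β) * (1 - lam / L) := by nlinarith
  have hbc : 0 ≤ β * (1 - lam / L) := mul_nonneg hβ0 hc.le
  refine ⟨((1 + β) * (1 - lam / L) + d) / 2, ((1 + β) * (1 - lam / L) - d) / 2,
    by linarith, ?_, ?_, ?_, ?_⟩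
  · intro x
    linear_combination (1 / 4 : ℝ) * hd2
  · -- 0 ≤ r₂ : need d ≤ a
    have hda : d ≤ (1 + β) * (1 - lam / L) := by nlinarith [hd2, hd0, ha, hbc]
    linarith
  · -- r₁ < 1 : need d < 2 - a
    have h2a : (1 + β) * (1 - lam / L) < 2 := by nlinarith
    have hlt : d < 2 - (1 + β) * (1 - lam / L) := by nlinarith [hd2, hd0, ht]
    linarith
  · -- 1 - s < r₁
    have key : (2 * (1 - s) - (1 + β) * (1 - lam / L)) ^ 2 < d ^ 2 := by
      rw [hd2, ← hssq]
      nlinarith [mul_pos (mul_pos hs0 (show (0:ℝ) < 1 - s by linarith)) h1]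
    nlinarith [key, hd0]
end

section
/- Let 0 < λ < L and β*(λ) := (1 − √(λ/L))/(1 + √(λ/L)) < β ≤ 1. Then the polynomial r² − (1+β)(1 − λ/L)·r + β(1 − λ/L) has two non-real complex-conjugate roots, and each root has modulus √(β(1 − λ/L)) < 1. -/
/-- Under-damped (high momentum) case `β* = (1 - √(lam/L))/(1 + √(lam/L)) < β ≤ 1`:
the polynomial `r² - (1+β)(1-lam/L) r + β(1-lam/L)` has two non-real complex-conjugate
roots, each of modulus `√(β(1-lam/L)) < 1`. -/
theorem stmt_11 (L lam β : ℝ) (hlam : 0 < lam) (hlamL : lam < L)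
    (hβl : (1 - Real.sqrt (lam / L)) / (1 + Real.sqrt (lam / L)) < β)
    (hβu : β ≤ 1) :
    ∃ r : ℂ, r.im ≠ 0 ∧
      (∀ x : ℂ, x ^ 2 - (((1 + β) * (1 - lam / L) : ℝ) : ℂ) * x
          + ((β * (1 - lam / L) : ℝ) : ℂ)
        = (x - r) * (x - (starRingEnd ℂ) r)) ∧
      ‖r‖ = Real.sqrt (β * (1 - lam / L)) ∧
      Real.sqrt (β * (1 - lam / L)) < 1 := by
  have hL : 0 < L := hlam.trans hlamL
  have hr0 : 0 < lam / L := div_pos hlam hL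
  have hr1 : lam / L < 1 := (div_lt_one hL).mpr hlamL
  set s : ℝ := Real.sqrt (lam / L) with hs
  have hs0 : 0 < s := Real.sqrt_pos.mpr hr0
  have hss : s ^ 2 = lam / L := Real.sq_sqrt hr0.le
  have hs1 : s < 1 := by nlinarith
  set c : ℝ := 1 - lam / L with hcdef
  have hc0 : 0 < c := by simp only [hcdef]; linarith
  have hc1 : c < 1 := by simp only [hcdef]; linarith
  have hcs : c = (1 - s) * (1 + s) := by
    rw [hcdef, ← hss]; ring
  have hkey : 1 - s < β * (1 + s) := by
    have := (div_lt_iff₀ (by linarith : (0:ℝ) < 1 + s)).mp hβl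
    linarith
  have hβ0 : 0 < β := by nlinarith
  have hkey2 : 0 < (1 + s) - (1 - s) * β := by nlinarith
  set a : ℝ := (1 + β) * c / 2 with ha
  have hD : 0 < β * c - a ^ 2 := by
    rw [ha, hcs]
    nlinarith [mul_pos (mul_pos (sub_pos.mpr hkey) hkey2) (mul_pos (by linarith : (0:ℝ) < 1 - s) (by linarith : (0:ℝ) < 1 + s))]
  set b : ℝ := Real.sqrt (β * c - a ^ 2) with hb
  have hb0 : 0 < b := Real.sqrt_pos.mpr hD
  have hb2 : b ^ 2 = β * c - a ^ 2 := Real.sq_sqrt hD.le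
  refine ⟨(a : ℂ) + (b : ℂ) * Complex.I, ?_, ?_, ?_, ?_⟩
  · simp [hb0.ne']
  · intro x
    have hconj : (starRingEnd ℂ) ((a : ℂ) + (b : ℂ) * Complex.I)
        = (a : ℂ) - (b : ℂ) * Complex.I := by
      simp [map_add, map_mul, Complex.conj_ofReal, Complex.conj_I]; ring
    rw [hconj]
    have h2a : ((1 + β) * c : ℝ) = 2 * a := by rw [ha]; ring
    have hsum : (β * c : ℝ) = a ^ 2 + b ^ 2 := by rw [hb2]; ring
    rw [h2a, hsum]
    push_cast
    linear_combination ((b:ℂ)^2) * Complex.I_sq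
  · have hnorm : Complex.normSq ((a : ℂ) + (b : ℂ) * Complex.I) = β * c := by
      simp [Complex.normSq_apply]
      nlinarith [hb2]
    rw [Complex.norm_def, hnorm]
  · have hlt : β * c < 1 := by nlinarith
    calc Real.sqrt (β * c) < Real.sqrt 1 := Real.sqrt_lt_sqrt (by positivity) hlt
      _ = 1 := Real.sqrt_one
end

section
/- Fix q ∈ (0, 1) and define θ₀ = 1 and, for each k ≥ 0, θ_{k+1} as the unique root in (0, 1] of θ² = (1 − θ)θ_k² + q·θ. Then the sequence (θ_k) is strictly decreasing, satisfies θ_k > √q for all k, and converges to √q; consequently β_{k+1} = θ_k(1 − θ_k)/(θ_k² + θ_{k+1}) converges to β* = (1 − √q)/(1 + √q). -/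
/-- For `q ∈ (0,1)`, the sequence `θ 0 = 1`, `θ (k+1)` the root in `(0,1]` of
`θ² = (1 - θ) (θ k)² + q θ`, is strictly decreasing, stays above `√q`, and converges
to `√q`; consequently the momentum `β (k+1) = θ k (1 - θ k)/((θ k)² + θ (k+1))`
converges to `β* = (1 - √q)/(1 + √q)`. -/
theorem stmt_16 (q : ℝ) (hq0 : 0 < q) (hq1 : q < 1) (θ : ℕ → ℝ)
    (hθ0 : θ 0 = 1)
    (hθ : ∀ k, θ (k + 1) ∈ Set.Ioc (0 : ℝ) 1 ∧
      (θ (k + 1)) ^ 2 = (1 - θ (k + 1)) * (θ k) ^ 2 + q * θ (k + 1)) :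
    StrictAnti θ ∧ (∀ k, Real.sqrt q < θ k) ∧
    Filter.Tendsto θ Filter.atTop (nhds (Real.sqrt q)) ∧
    Filter.Tendsto (fun k => θ k * (1 - θ k) / ((θ k) ^ 2 + θ (k + 1)))
      Filter.atTop (nhds ((1 - Real.sqrt q) / (1 + Real.sqrt q))) := by
  set s := Real.sqrt q with hsdef
  have hs0 : 0 < s := Real.sqrt_pos.mpr hq0
  have hs2 : s ^ 2 = q := Real.sq_sqrt hq0.le
  have hs1 : s < 1 := by nlinarith
  have hgt : ∀ k, s < θ k := by
    intro k
    induction k with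
    | zero => rw [hθ0]; exact hs1
    | succ n ih =>
      obtain ⟨⟨hp, hle⟩, he⟩ := hθ n
      nlinarith [mul_pos (sub_pos.mpr ih) (by linarith : (0:ℝ) < θ n + s),
        mul_pos hp hs0, sq_nonneg (θ (n+1) - s)]
  have hlt : ∀ k, θ (k+1) < θ k := by
    intro k
    obtain ⟨⟨hp, hle⟩, he⟩ := hθ k
    nlinarith [hgt k, hgt (k+1), mul_pos hp
      (by nlinarith [hgt k, hs0] : (0:ℝ) < (θ k)^2 - q)]
  have hSA : StrictAnti θ := strictAnti_nat_of_succ_lt hlt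
  have hbdd : BddBelow (Set.range θ) := ⟨s, by rintro _ ⟨k, rfl⟩; exact (hgt k).le⟩
  have htend : Filter.Tendsto θ Filter.atTop (nhds (⨅ k, θ k)) :=
    tendsto_atTop_ciInf hSA.antitone hbdd
  set L := ⨅ k, θ k with hL
  have hLs : s ≤ L := le_ciInf fun k => (hgt k).le
  have htend' : Filter.Tendsto (fun k => θ (k+1)) Filter.atTop (nhds L) :=
    htend.comp (Filter.tendsto_add_atTop_nat 1)
  have heq : L ^ 2 = (1 - L) * L ^ 2 + q * L := by
    have h1 : Filter.Tendsto (fun k => (θ (k+1))^2) Filter.atTop (nhds (L^2)) := htend'.pow 2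
    have h2 : Filter.Tendsto (fun k => (1 - θ (k+1)) * (θ k)^2 + q * θ (k+1)) Filter.atTop
        (nhds ((1 - L) * L^2 + q * L)) :=
      ((tendsto_const_nhds.sub htend').mul (htend.pow 2)).add (tendsto_const_nhds.mul htend')
    have hfe : (fun k => (θ (k+1))^2) = fun k => (1 - θ (k+1)) * (θ k)^2 + q * θ (k+1) := by
      funext k; exact (hθ k).2
    rw [hfe] at h1
    exact tendsto_nhds_unique h1 h2
  have hLeq : L = s := by
    have hLpos : 0 < L := lt_of_lt_of_le hs0 hLs
    have h4 : L * (L ^ 2 - q) = 0 := by linear_combination heq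
    have h3 : L ^ 2 = q := by
      rcases mul_eq_zero.mp h4 with h | h
      · exact absurd h hLpos.ne'
      · linarith
    nlinarith [h3, hs2, (by linarith : (0:ℝ) < L + s)]
  rw [hLeq] at htend htend'
  refine ⟨hSA, hgt, htend, ?_⟩
  have hden : Filter.Tendsto (fun k => (θ k)^2 + θ (k+1)) Filter.atTop (nhds (s^2 + s)) :=
    (htend.pow 2).add htend'
  have hnum : Filter.Tendsto (fun k => θ k * (1 - θ k)) Filter.atTop (nhds (s * (1 - s))) :=
    htend.mul (tendsto_const_nhds.sub htend)
  have hdne : s^2 + s ≠ 0 := by positivity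
  have hfin := hnum.div hden hdne
  have heq2 : s * (1 - s) / (s^2 + s) = (1 - s) / (1 + s) := by
    rw [show s^2 + s = s * (1 + s) by ring]
    exact mul_div_mul_left _ _ hs0.ne'
  rw [heq2] at hfin
  exact hfin
end
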